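/- Let A be an N×N Hermitian matrix all of whose entries have modulus exactly 1, and suppose every 3×3 principal minor of A is non-negative. Then A = u u* where u is the conjugate of the first row of A, i.e., a_{ij} = conj(a_{1i}) · a_{1j} for all i, j. In particular A has rank one. -/

import Mathlib

open Matrix
open scoped ComplexOrder

set_option maxRecDepth 10000 in
private lemma vec3_injective {M : ℕ} {x y z : Fin M} (hxy : x ≠ y) (hxz : x ≠ z)
    (hyz : y ≠ z) : Function.Injective (![x, y, z] : Fin 3 → Fin M) := by
  intro k l hkl
  fin_cases k <;> fin_cases l <;> simp_all

/-- Let `A` be an `N × N` Hermitian matrix all of whose entries have modulus `1`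
(and with unit diagonal), and suppose every `3 × 3` principal minor of `A` is
non-negative. Then `a_{ij} = conj (a_{1i}) * a_{1j}` for all `i, j`, i.e.
`A = u u*` with `u` the conjugate of the first row; in particular `A` has rank one. -/
theorem stmt2 {N : ℕ} (hN : 0 < N) (A : Matrix (Fin N) (Fin N) ℂ)
    (hA : A.IsHermitian)
    (hdiag : ∀ i, A i i = 1)
    (hmod : ∀ i j, ‖A i j‖ = 1)
    (h3 : ∀ S : Finset (Fin N), S.card = 3 →
      0 ≤ (A.submatrix (fun i : S => (i : Fin N)) (fun i : S => (i : Fin N))).det) :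
    (∀ i j, A i j = (starRingEnd ℂ) (A ⟨0, hN⟩ i) * A ⟨0, hN⟩ j) ∧ A.rank = 1 := by
  have hherm : ∀ i j, A i j = (starRingEnd ℂ) (A j i) := by
    intro i j; rw [← hA.apply i j]; rfl
  have hcm : ∀ i j, A i j * (starRingEnd ℂ) (A i j) = 1 := by
    intro i j
    rw [Complex.mul_conj, Complex.normSq_eq_norm_sq, hmod, one_pow, Complex.ofReal_one]
  have key : ∀ x y z : Fin N, x ≠ y → x ≠ z → y ≠ z →
      A y z = (starRingEnd ℂ) (A x y) * A x z := by
    intro x y z hxy hxz hyz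
    have hS : ({x, y, z} : Finset (Fin N)).card = 3 :=
      Finset.card_eq_three.mpr ⟨x, y, z, hxy, hxz, hyz, rfl⟩
    have hdet := h3 {x, y, z} hS
    have hgm : ∀ k : Fin 3, (![x, y, z]) k ∈ ({x, y, z} : Finset (Fin N)) := by
      intro k; fin_cases k <;> simp
    have hginj : Function.Injective (![x, y, z] : Fin 3 → Fin N) :=
      vec3_injective hxy hxz hyz
    have hbij : Function.Bijective
        (fun k : Fin 3 => (⟨![x, y, z] k, hgm k⟩ : ({x, y, z} : Finset (Fin N)))) := by
      rw [Fintype.bijective_iff_injective_and_card]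
      refine ⟨fun k l hkl => hginj (congrArg Subtype.val hkl), ?_⟩
      rw [Fintype.card_fin, Fintype.card_coe, hS]
    have hEq : (A.submatrix ![x, y, z] ![x, y, z]).det =
        (A.submatrix (fun i : ({x, y, z} : Finset (Fin N)) => (i : Fin N))
          (fun i : ({x, y, z} : Finset (Fin N)) => (i : Fin N))).det := by
      rw [← Matrix.det_submatrix_equiv_self (Equiv.ofBijective _ hbij)]
      rfl
    rw [← hEq] at hdet
    have hcw : (starRingEnd ℂ) (A x y * A y z * (starRingEnd ℂ) (A x z)) =
        (starRingEnd ℂ) (A x y) * (starRingEnd ℂ) (A y z) * A x z := by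
      rw [_root_.map_mul, _root_.map_mul, Complex.conj_conj]
    have hexp : (A.submatrix ![x, y, z] ![x, y, z]).det =
        A x y * A y z * (starRingEnd ℂ) (A x z) +
          (starRingEnd ℂ) (A x y * A y z * (starRingEnd ℂ) (A x z)) - 2 := by
      rw [Matrix.det_fin_three]
      simp only [Matrix.submatrix_apply, Matrix.cons_val_zero, Matrix.cons_val_one,
        Matrix.head_cons, Matrix.cons_val_two, Matrix.tail_cons]
      rw [hdiag, hdiag, hdiag, hherm y x, hherm z x, hherm z y]
      linear_combination -hcw - hcm x y - hcm x z - hcm y z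
    rw [hexp] at hdet
    have h0 := (Complex.le_def.mp hdet).1
    simp only [Complex.zero_re, Complex.sub_re, Complex.add_re, Complex.conj_re] at h0
    have hre : (1 : ℝ) ≤ (A x y * A y z * (starRingEnd ℂ) (A x z)).re := by
      have h2 : (2 : ℂ).re = 2 := by norm_num
      rw [h2] at h0
      linarith
    have habs : ‖A x y * A y z * (starRingEnd ℂ) (A x z)‖ = 1 := by
      rw [norm_mul, norm_mul, Complex.norm_conj, hmod, hmod, hmod]
      norm_num
    have hw1 : A x y * A y z * (starRingEnd ℂ) (A x z) = 1 := by
      have hre' : (A x y * A y z * (starRingEnd ℂ) (A x z)).re = 1 :=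
        le_antisymm (habs ▸ Complex.re_le_norm _) hre
      have hsq := Complex.sq_norm (A x y * A y z * (starRingEnd ℂ) (A x z))
      rw [habs, Complex.normSq_apply, hre'] at hsq
      have him : (A x y * A y z * (starRingEnd ℂ) (A x z)).im = 0 := by nlinarith
      exact Complex.ext hre' him
    linear_combination (starRingEnd ℂ) (A x y) * (A x z) * hw1 - (A y z) * hcm x y
      - (A y z) * (A x y) * (starRingEnd ℂ) (A x y) * hcm x z
  have main : ∀ i j, A i j = (starRingEnd ℂ) (A ⟨0, hN⟩ i) * A ⟨0, hN⟩ j := by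
    intro i j
    by_cases hij : i = j
    · subst hij
      rw [hdiag, mul_comm]
      exact (hcm ⟨0, hN⟩ i).symm
    by_cases hi : i = ⟨0, hN⟩
    · subst hi
      rw [hdiag, RingHom.map_one, one_mul]
    by_cases hj : j = ⟨0, hN⟩
    · subst hj
      rw [hdiag, mul_one, hherm i ⟨0, hN⟩]
    exact key ⟨0, hN⟩ i j (fun h => hi h.symm) (fun h => hj h.symm) hij
  refine ⟨main, ?_⟩
  have hu : A = Matrix.vecMulVec (fun i => (starRingEnd ℂ) (A ⟨0, hN⟩ i))
      (fun j => A ⟨0, hN⟩ j) := by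
    ext i j
    rw [Matrix.vecMulVec_apply]
    exact main i j
  have hle : A.rank ≤ 1 := by
    rw [hu, Matrix.vecMulVec_eq (Fin 1)]
    exact le_trans (Matrix.rank_mul_le_right _ _)
      (le_of_le_of_eq (Matrix.rank_le_card_height _) (Fintype.card_fin 1))
  have hne : A.rank ≠ 0 := by
    intro h0
    rw [Matrix.rank_eq_finrank_span_cols] at h0
    have hbot := Submodule.finrank_eq_zero.mp h0
    have hmem : A.col ⟨0, hN⟩ ∈ Submodule.span ℂ (Set.range A.col) :=
      Submodule.subset_span ⟨⟨0, hN⟩, rfl⟩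
    rw [hbot] at hmem
    have h00 := congrFun ((Submodule.mem_bot ℂ).mp hmem) ⟨0, hN⟩
    simp only [Matrix.col_apply, Pi.zero_apply] at h00
    rw [hdiag] at h00
    exact one_ne_zero h00
  omega
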